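/- Let X and Y be independent random variables with values in measurable spaces 𝒳 and 𝒴, let 𝖽 : 𝒳 × 𝒴 → [0,∞) be jointly measurable with E[𝖽(X,Y)²] < ∞, let λ ≥ 0 and c ≥ 0, and define ȷ(x) = −λ c − ln E[exp(−λ 𝖽(x,Y))] (expectation over Y only). Then Var[ȷ(X)] ≤ 2λ² ( E[𝖽(X,Y)²] + c² ). (This is the per-coordinate estimate underlying the paper's Lemma 3, which shows that the source dispersion V_n(d) = (1/n)Σ_i Var[ȷ(X_i,d_i)] is uniformly bounded above under a uniform second-moment condition on the distortion.) -/

import Mathlib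

open MeasureTheory ProbabilityTheory

/-- Per-coordinate variance bound for the d-tilted information (Lemma 3 core):
if `ȷ(x) = -λc - ln E[exp(-λ d(x,Y))]`, then `Var[ȷ(X)] ≤ 2λ²(E[d(X,Y)²] + c²)`. -/
theorem variance_tilted_information_le
    {α β : Type*} [MeasurableSpace α] [MeasurableSpace β]
    (μ : Measure α) (ν : Measure β) [IsProbabilityMeasure μ] [IsProbabilityMeasure ν]
    (dist : α → β → ℝ) (hmeas : Measurable (Function.uncurry dist))
    (hnn : ∀ x y, 0 ≤ dist x y)
    (hint : Integrable (fun p : α × β => (dist p.1 p.2) ^ 2) (μ.prod ν))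
    (lam c : ℝ) (hlam : 0 ≤ lam) (hc : 0 ≤ c)
    (j : α → ℝ)
    (hj : ∀ x, j x = -lam * c - Real.log (∫ y, Real.exp (-lam * dist x y) ∂ν)) :
    variance j μ ≤
      2 * lam ^ 2 * ((∫ p : α × β, (dist p.1 p.2) ^ 2 ∂(μ.prod ν)) + c ^ 2) := by
  classical
  set g : α → ℝ := fun x => ∫ y, Real.exp (-lam * dist x y) ∂ν with hgdef
  set m : α → ℝ := fun x => ∫ y, dist x y ∂ν with hmdef
  set q : α → ℝ := fun x => ∫ y, (dist x y) ^ 2 ∂ν with hqdef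
  set h : α → ℝ := fun x => -Real.log (g x) with hhdef
  -- measurability
  have hg_meas : StronglyMeasurable g := by
    apply MeasureTheory.StronglyMeasurable.integral_prod_right
      (f := fun x y => Real.exp (-lam * dist x y))
    exact ((hmeas.const_mul (-lam)).exp).stronglyMeasurable
  have hm_meas : StronglyMeasurable m :=
    MeasureTheory.StronglyMeasurable.integral_prod_right (f := dist) hmeas.stronglyMeasurable
  have h_meas : Measurable h := (hg_meas.measurable.log).neg
  -- per-x integrability of the exponential section
  have hexp_int : ∀ x, Integrable (fun y => Real.exp (-lam * dist x y)) ν := by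
    intro x
    refine (integrable_const (1 : ℝ)).mono'
      (((hmeas.of_uncurry_left.const_mul (-lam)).exp).aestronglyMeasurable) ?_
    filter_upwards with y
    rw [Real.norm_eq_abs, abs_of_pos (Real.exp_pos _)]
    exact Real.exp_le_one_iff.2 (by nlinarith [hnn x y])
  -- a.e. pointwise bounds
  have key : ∀ᵐ x ∂μ, 0 ≤ h x ∧ h x ≤ lam * m x ∧ (m x) ^ 2 ≤ q x := by
    filter_upwards [hint.prod_right_ae] with x hx2
    have hdx_meas : Measurable (dist x) := hmeas.of_uncurry_left
    have hx2' : Integrable (fun y => dist x y ^ 2) ν := hx2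
    have hx1 : Integrable (dist x) ν :=
      ((memLp_two_iff_integrable_sq hdx_meas.aestronglyMeasurable).2 hx2').integrable one_le_two
    have hg_pos : 0 < g x := integral_exp_pos (hexp_int x)
    have hg_le_one : g x ≤ 1 := by
      calc g x ≤ ∫ _, (1 : ℝ) ∂ν := by
            refine integral_mono (hexp_int x) (integrable_const 1) fun y => ?_
            exact Real.exp_le_one_iff.2 (by nlinarith [hnn x y])
        _ = 1 := by simp
    have jensen1 : Real.exp (∫ y, -lam * dist x y ∂ν) ≤ g x := by
      refine convexOn_exp.map_integral_le Real.continuous_exp.continuousOn isClosed_univ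
        (Filter.Eventually.of_forall fun y => Set.mem_univ _) (hx1.const_mul (-lam)) ?_
      exact hexp_int x
    have hmul : ∫ y, -lam * dist x y ∂ν = -lam * m x := by
      rw [hmdef]; exact MeasureTheory.integral_const_mul _ _
    have h_le : h x ≤ lam * m x := by
      have hlog : -lam * m x ≤ Real.log (g x) := by
        rw [Real.le_log_iff_exp_le hg_pos, ← hmul]; exact jensen1
      simp only [hhdef]; linarith
    have h_nn : 0 ≤ h x := by
      have := Real.log_nonpos hg_pos.le hg_le_one
      simp only [hhdef]; linarith
    have jensen2 : (m x) ^ 2 ≤ q x := by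
      have := (Even.convexOn_pow (even_two)).map_integral_le
        (continuous_pow 2).continuousOn isClosed_univ
        (Filter.Eventually.of_forall fun y => Set.mem_univ (dist x y)) hx1 hx2'
      simpa [hmdef, hqdef] using this
    exact ⟨h_nn, h_le, jensen2⟩
  -- integrability facts
  have hq_int : Integrable q μ := hint.integral_prod_left
  have hq_eq : ∫ x, q x ∂μ = ∫ p : α × β, (dist p.1 p.2) ^ 2 ∂(μ.prod ν) :=
    integral_integral (f := fun x y => dist x y ^ 2) hint
  have hm2_int : Integrable (fun x => (m x) ^ 2) μ := by
    refine hq_int.mono' ((hm_meas.measurable.pow_const 2).aestronglyMeasurable) ?_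
    filter_upwards [key] with x hx
    rw [Real.norm_eq_abs, abs_of_nonneg (sq_nonneg _)]
    exact hx.2.2
  have hlm2_int : Integrable (fun x => (lam * m x) ^ 2) μ := by
    simp_rw [mul_pow]
    exact hm2_int.const_mul _
  have h_memLp : MemLp h 2 μ := by
    have hlm : MemLp (fun x => lam * m x) 2 μ :=
      (memLp_two_iff_integrable_sq
        ((hm_meas.measurable.const_mul lam).aestronglyMeasurable)).2 hlm2_int
    refine MemLp.of_le hlm h_meas.aestronglyMeasurable ?_
    filter_upwards [key] with x hx
    rw [Real.norm_eq_abs, Real.norm_eq_abs, abs_of_nonneg hx.1]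
    exact hx.2.1.trans (le_abs_self _)
  have h2_int : Integrable (fun x => (h x) ^ 2) μ := by
    have := (memLp_two_iff_integrable_sq h_meas.aestronglyMeasurable).1 h_memLp
    exact this
  -- variance is unchanged by subtracting the constant lam * c
  have hvar_eq : variance j μ = variance h μ := by
    have hj_fun : j = fun x => h x + -(lam * c) := by
      funext x; rw [hj x]; simp only [hhdef]; ring
    rw [hj_fun]
    have hμh : ∫ x, (h x + -(lam * c)) ∂μ = (∫ x, h x ∂μ) + -(lam * c) := by
      rw [integral_add (h_memLp.integrable one_le_two) (integrable_const _), integral_const]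
      simp
    unfold ProbabilityTheory.variance ProbabilityTheory.evariance
    congr 1
    apply lintegral_congr
    intro x
    rw [hμh]
    ring_nf
  have hA : 0 ≤ ∫ p : α × β, (dist p.1 p.2) ^ 2 ∂(μ.prod ν) :=
    integral_nonneg fun p => sq_nonneg _
  calc variance j μ = variance h μ := hvar_eq
    _ ≤ ∫ x, (h x) ^ 2 ∂μ := by
        have := variance_le_expectation_sq (μ := μ) h_meas.aestronglyMeasurable
        simpa using this
    _ ≤ ∫ x, (lam * m x) ^ 2 ∂μ := by
        refine integral_mono_ae h2_int hlm2_int ?_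
        filter_upwards [key] with x hx
        exact pow_le_pow_left₀ hx.1 hx.2.1 2
    _ = lam ^ 2 * ∫ x, (m x) ^ 2 ∂μ := by
        simp_rw [mul_pow]
        exact MeasureTheory.integral_const_mul _ _
    _ ≤ lam ^ 2 * ∫ x, q x ∂μ := by
        refine mul_le_mul_of_nonneg_left ?_ (sq_nonneg lam)
        refine integral_mono_ae hm2_int hq_int ?_
        filter_upwards [key] with x hx
        exact hx.2.2
    _ = lam ^ 2 * ∫ p : α × β, (dist p.1 p.2) ^ 2 ∂(μ.prod ν) := by rw [hq_eq]
    _ ≤ 2 * lam ^ 2 * ((∫ p : α × β, (dist p.1 p.2) ^ 2 ∂(μ.prod ν)) + c ^ 2) := by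
        nlinarith [sq_nonneg lam, sq_nonneg c]
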